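/- Let N, d ≥ 1, B > 0, L > 0, α > 0, ε ≥ 0, τ ≥ 1 a natural number with 6NBτε ≤ 1, and θ* ∈ ℝ^d. Let θ_1,…,θ_N ∈ ℝ^d with average θ̄ and consensus error S = ∑_i ‖θ_i − θ̄‖², and let θ'_1,…,θ'_N ∈ ℝ^d with average θ̄' and consensus error S' = ∑_i ‖θ'_i − θ̄'‖². Assume ‖θ̄ − θ̄'‖ ≤ 3εBτ(‖θ̄‖ + √(S') + 1), and let w_1,…,w_N ∈ ℝ^d satisfy ‖w_i‖ ≤ L(‖θ_i − θ̄‖ + ‖θ'_i − θ̄'‖ + ‖θ̄ − θ̄'‖) for all i. Then, writing R = ‖θ̄ − θ*‖², one has ⟨θ̄' − θ*, ∑_{i=1}^N w_i⟩ ≤ 48ετNBL·R + (α/2)R + (NL²/α + L/2) S + (4NL²/α + 5L) S' + (45ετNBL/2)(2‖θ*‖² + 1). -/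

import Mathlib

/-- Euclidean norm of a vector in `ℝ^d` given as a plain function. -/
noncomputable def euclNorm {d : ℕ} (v : Fin d → ℝ) : ℝ :=
  ‖(WithLp.equiv 2 (Fin d → ℝ)).symm v‖

/-- Euclidean inner product of two vectors in `ℝ^d` given as plain functions. -/
noncomputable def edot {d : ℕ} (u v : Fin d → ℝ) : ℝ :=
  inner ℝ ((WithLp.equiv 2 (Fin d → ℝ)).symm u) ((WithLp.equiv 2 (Fin d → ℝ)).symm v)

lemma enorm_nonneg' {d : ℕ} (v : Fin d → ℝ) : 0 ≤ euclNorm v := norm_nonneg _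

lemma enorm_sub_le' {d : ℕ} (u v : Fin d → ℝ) : euclNorm (u - v) ≤ euclNorm u + euclNorm v :=
  norm_sub_le ((WithLp.equiv 2 (Fin d → ℝ)).symm u) ((WithLp.equiv 2 (Fin d → ℝ)).symm v)

lemma enorm_add_le' {d : ℕ} (u v : Fin d → ℝ) : euclNorm (u + v) ≤ euclNorm u + euclNorm v :=
  norm_add_le ((WithLp.equiv 2 (Fin d → ℝ)).symm u) ((WithLp.equiv 2 (Fin d → ℝ)).symm v)

lemma enorm_sum_le' {N d : ℕ} (w : Fin N → Fin d → ℝ) :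
    euclNorm (∑ i, w i) ≤ ∑ i, euclNorm (w i) :=
  by
    have h : (WithLp.equiv 2 (Fin d → ℝ)).symm (∑ i, w i)
        = ∑ i, (WithLp.equiv 2 (Fin d → ℝ)).symm (w i) :=
      map_sum (WithLp.linearEquiv 2 ℝ (Fin d → ℝ)).symm _ _
    unfold euclNorm; rw [h]
    exact norm_sum_le Finset.univ (fun i => (WithLp.equiv 2 (Fin d → ℝ)).symm (w i))

lemma edot_le' {d : ℕ} (u v : Fin d → ℝ) : edot u v ≤ euclNorm u * euclNorm v :=
  real_inner_le_norm _ _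

/-- Young-type inequality with parameter `α`. -/
lemma auxP1 (L R0 A Nr S α D : ℝ) (hα : 0 < α) (hαD : α * D = Nr * L ^ 2)
    (hA2 : A ^ 2 ≤ Nr * S) :
    L * R0 * A ≤ α / 4 * R0 ^ 2 + D * S := by
  have h : 0 ≤ (α * R0 - 2 * L * A) ^ 2 := sq_nonneg _
  have h2 : L ^ 2 * A ^ 2 ≤ L ^ 2 * (Nr * S) :=
    mul_le_mul_of_nonneg_left hA2 (sq_nonneg L)
  have h3 : α * D * S = L ^ 2 * (Nr * S) := by rw [hαD]; ring
  have h4 : α * (L * R0 * A) ≤ α * (α / 4 * R0 ^ 2 + D * S) := by nlinarith [h, h2, h3]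
  exact le_of_mul_le_mul_left h4 hα

/-- AM–GM type bound `2 E A ≤ N E² + S` from `A² ≤ N S`. -/
lemma auxAM (E A Nr S : ℝ) (hE0 : 0 ≤ E) (hA0 : 0 ≤ A) (hS0 : 0 ≤ S)
    (hN0 : 0 ≤ Nr) (hA2 : A ^ 2 ≤ Nr * S) :
    2 * (E * A) ≤ Nr * E ^ 2 + S := by
  have hAr : A ≤ Real.sqrt Nr * Real.sqrt S := by
    rw [← Real.sqrt_mul hN0, ← Real.sqrt_sq hA0]
    exact Real.sqrt_le_sqrt hA2
  have h1 : E * A ≤ E * (Real.sqrt Nr * Real.sqrt S) := mul_le_mul_of_nonneg_left hAr hE0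
  have h2 : (Real.sqrt Nr) ^ 2 = Nr := Real.sq_sqrt hN0
  have h3 : (Real.sqrt S) ^ 2 = S := Real.sq_sqrt hS0
  nlinarith [sq_nonneg (Real.sqrt Nr * E - Real.sqrt S), h1, h2, h3]

lemma auxP3 (Nr L R0 E c3 T Q P S' cc : ℝ)
    (hR00 : 0 ≤ R0) (hc30 : 0 ≤ c3) (hNL : 0 ≤ Nr * L)
    (hE : E ≤ c3 * (T + Q + 1)) (hT : T ≤ R0 + P) (hQ2 : Q ^ 2 = S')
    (hc : Nr * L * c3 = 3 * cc) :
    Nr * L * R0 * E ≤ 3 * cc * (5/2 * R0 ^ 2 + P ^ 2 / 2 + S' / 2 + 1 / 2) := by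
  have h1 : R0 * E ≤ c3 * (R0 * (T + Q + 1)) := by
    have := mul_le_mul_of_nonneg_left hE hR00
    linarith [this]
  have h2 : R0 * (T + Q + 1) ≤ 5/2 * R0 ^ 2 + P ^ 2 / 2 + Q ^ 2 / 2 + 1 / 2 := by
    nlinarith [sq_nonneg (R0 - P), sq_nonneg (R0 - Q), sq_nonneg (R0 - 1),
      mul_le_mul_of_nonneg_left hT hR00]
  have h3 : R0 * E ≤ c3 * (5/2 * R0 ^ 2 + P ^ 2 / 2 + S' / 2 + 1 / 2) := by
    rw [← hQ2]
    calc R0 * E ≤ c3 * (R0 * (T + Q + 1)) := h1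
    _ ≤ c3 * (5/2 * R0 ^ 2 + P ^ 2 / 2 + Q ^ 2 / 2 + 1 / 2) :=
        mul_le_mul_of_nonneg_left h2 hc30
  have h4 := mul_le_mul_of_nonneg_left h3 hNL
  nlinarith [h4]

lemma auxP6 (Nr L E c3 T Q S' R0 P : ℝ)
    (hE0 : 0 ≤ E) (hc30 : 0 ≤ c3) (hT0 : 0 ≤ T) (hQ0 : 0 ≤ Q) (hL0 : 0 ≤ L)
    (hN0 : 0 ≤ Nr) (hR00 : 0 ≤ R0) (hP0 : 0 ≤ P) (hS'0 : 0 ≤ S')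
    (hE : E ≤ c3 * (T + Q + 1)) (hQ2 : Q ^ 2 = S') (hT : T ≤ R0 + P)
    (hc3N : c3 * Nr ≤ 1 / 2) :
    2 * Nr * L * E ^ 2 ≤ 3 * (L * c3) * (2 * R0 ^ 2 + 2 * P ^ 2 + S' + 1) := by
  have hE2 : E ^ 2 ≤ 3 * c3 ^ 2 * (T ^ 2 + S' + 1) := by
    rw [← hQ2]
    have h1 : E ^ 2 ≤ (c3 * (T + Q + 1)) ^ 2 := by
      apply sq_le_sq' _ hE
      nlinarith [mul_nonneg hc30 (by linarith : (0:ℝ) ≤ T + Q + 1)]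
    nlinarith [sq_nonneg (T - Q), sq_nonneg (T - 1), sq_nonneg (Q - 1), sq_nonneg c3]
  have hT2 : T ^ 2 ≤ 2 * R0 ^ 2 + 2 * P ^ 2 := by
    nlinarith [hT, hT0, sq_nonneg (R0 - P)]
  have step1 : 2 * Nr * L * E ^ 2 ≤ 2 * Nr * L * (3 * c3 ^ 2 * (T ^ 2 + S' + 1)) :=
    mul_le_mul_of_nonneg_left hE2 (by positivity)
  have step2 : 2 * Nr * L * (3 * c3 ^ 2 * (T ^ 2 + S' + 1)) ≤
      3 * (L * c3) * (T ^ 2 + S' + 1) := by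
    have hpos : (0:ℝ) ≤ T ^ 2 + S' + 1 := by positivity
    have h6 : 6 * L * c3 * (c3 * Nr) ≤ 6 * L * c3 * (1/2) :=
      mul_le_mul_of_nonneg_left hc3N (by positivity)
    nlinarith [mul_le_mul_of_nonneg_right h6 hpos]
  have step3 : 3 * (L * c3) * (T ^ 2 + S' + 1) ≤
      3 * (L * c3) * (2 * R0 ^ 2 + 2 * P ^ 2 + S' + 1) := by
    apply mul_le_mul_of_nonneg_left _ (by positivity)
    linarith
  linarith

lemma auxCombine (X R0 E A B2 S S' P c c3 D L α Nr : ℝ)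
    (hL : 0 < L) (hα : 0 < α)
    (hc0 : 0 ≤ c) (hD0 : 0 ≤ D) (hLc3 : L * c3 ≤ 3 * c) (hcL : c ≤ L / 6)
    (hS'0 : 0 ≤ S')
    (hmain : X ≤ L * R0 * A + L * R0 * B2 + Nr * L * R0 * E + L * E * A + L * E * B2
        + Nr * L * E ^ 2)
    (P1 : L * R0 * A ≤ α / 4 * R0 ^ 2 + D * S)
    (P2 : L * R0 * B2 ≤ α / 4 * R0 ^ 2 + D * S')
    (P3 : Nr * L * R0 * E ≤ 3 * c * (5/2 * R0 ^ 2 + P ^ 2 / 2 + S' / 2 + 1 / 2))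
    (P4 : L * E * A ≤ L / 2 * (Nr * E ^ 2 + S))
    (P5 : L * E * B2 ≤ L / 2 * (Nr * E ^ 2 + S'))
    (P6 : 2 * Nr * L * E ^ 2 ≤ 3 * (L * c3) * (2 * R0 ^ 2 + 2 * P ^ 2 + S' + 1)) :
    X ≤ 48 * c * R0 ^ 2 + α / 2 * R0 ^ 2 + (D + L / 2) * S + (4 * D + 5 * L) * S'
        + 45 * c / 2 * (2 * P ^ 2 + 1) := by
  have f1 : 0 ≤ ((81/2) * c - 6 * (L * c3)) * R0 ^ 2 :=
    mul_nonneg (by linarith) (sq_nonneg _)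
  have f2 : 0 ≤ D * S' := mul_nonneg hD0 hS'0
  have f3 : 0 ≤ ((9/2) * L - (3/2) * c - 3 * (L * c3)) * S' :=
    mul_nonneg (by linarith) hS'0
  have f4 : 0 ≤ ((87/2) * c - 6 * (L * c3)) * P ^ 2 :=
    mul_nonneg (by linarith) (sq_nonneg _)
  have f5 : (0:ℝ) ≤ 21 * c - 3 * (L * c3) := by linarith
  nlinarith [f1, f2, f3, f4, f5]

set_option maxHeartbeats 1000000 in
/-- Bound on the combined Lipschitz cross terms `T₃ + T₄ + T₅`. -/
theorem lipschitz_cross_terms_bound (N d : ℕ) (hN : 1 ≤ N) (hd : 1 ≤ d)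
    (B L α ε : ℝ) (hB : 0 < B) (hL : 0 < L) (hα : 0 < α) (hε : 0 ≤ ε)
    (τ : ℕ) (hτ : 1 ≤ τ) (hstep : 6 * N * B * τ * ε ≤ 1)
    (θstar : Fin d → ℝ)
    (θ θ' : Fin N → Fin d → ℝ)
    (θbar : Fin d → ℝ) (hθbar : θbar = fun j => (N : ℝ)⁻¹ * ∑ i, θ i j)
    (θbar' : Fin d → ℝ) (hθbar' : θbar' = fun j => (N : ℝ)⁻¹ * ∑ i, θ' i j)
    (S : ℝ) (hS : S = ∑ i, (euclNorm (fun j => θ i j - θbar j)) ^ 2)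
    (S' : ℝ) (hS' : S' = ∑ i, (euclNorm (fun j => θ' i j - θbar' j)) ^ 2)
    (hdrift : euclNorm (θbar - θbar') ≤ 3 * ε * B * τ * (euclNorm θbar + Real.sqrt S' + 1))
    (w : Fin N → Fin d → ℝ)
    (hw : ∀ i, euclNorm (w i)
      ≤ L * (euclNorm (fun j => θ i j - θbar j) + euclNorm (fun j => θ' i j - θbar' j)
          + euclNorm (θbar - θbar'))) :
    edot (θbar' - θstar) (∑ i, w i)
      ≤ 48 * ε * τ * N * B * L * (euclNorm (θbar - θstar)) ^ 2
        + α / 2 * (euclNorm (θbar - θstar)) ^ 2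
        + (N * L ^ 2 / α + L / 2) * S
        + (4 * N * L ^ 2 / α + 5 * L) * S'
        + 45 * ε * τ * N * B * L / 2 * (2 * (euclNorm θstar) ^ 2 + 1) := by
  set a : Fin N → ℝ := fun i => euclNorm (fun j => θ i j - θbar j) with ha
  set b : Fin N → ℝ := fun i => euclNorm (fun j => θ' i j - θbar' j) with hb
  set E : ℝ := euclNorm (θbar - θbar') with hEdef
  set R0 : ℝ := euclNorm (θbar - θstar) with hR0def
  set T : ℝ := euclNorm θbar with hTdef
  set P : ℝ := euclNorm θstar with hPdef
  set Q : ℝ := Real.sqrt S' with hQdef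
  set A : ℝ := ∑ i, a i with hAdef
  set B2 : ℝ := ∑ i, b i with hB2def
  have hS0 : 0 ≤ S := by rw [hS]; exact Finset.sum_nonneg fun i _ => sq_nonneg _
  have hS'0 : 0 ≤ S' := by rw [hS']; exact Finset.sum_nonneg fun i _ => sq_nonneg _
  have hQ2 : Q ^ 2 = S' := Real.sq_sqrt hS'0
  have hQ0 : 0 ≤ Q := Real.sqrt_nonneg _
  have hE0 : 0 ≤ E := enorm_nonneg' _
  have hR00 : 0 ≤ R0 := enorm_nonneg' _
  have hT0 : 0 ≤ T := enorm_nonneg' _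
  have hP0 : 0 ≤ P := enorm_nonneg' _
  have hA0 : 0 ≤ A := Finset.sum_nonneg fun i _ => enorm_nonneg' _
  have hB20 : 0 ≤ B2 := Finset.sum_nonneg fun i _ => enorm_nonneg' _
  have hN0 : (1:ℝ) ≤ (N:ℝ) := by exact_mod_cast hN
  have hA2 : A ^ 2 ≤ N * S := by
    rw [hS, hAdef]
    have := sq_sum_le_card_mul_sum_sq (s := (Finset.univ : Finset (Fin N))) (f := a)
    simpa using this
  have hB22 : B2 ^ 2 ≤ N * S' := by
    rw [hS', hB2def]
    have := sq_sum_le_card_mul_sum_sq (s := (Finset.univ : Finset (Fin N))) (f := b)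
    simpa using this
  have hT : T ≤ R0 + P := by
    have h : θbar = (θbar - θstar) + θstar := by
      ext j; simp only [Pi.add_apply, Pi.sub_apply]; ring
    calc T = euclNorm ((θbar - θstar) + θstar) := by rw [hTdef, ← h]
    _ ≤ R0 + P := enorm_add_le' _ _
  have htri : euclNorm (θbar' - θstar) ≤ R0 + E := by
    have h : θbar' - θstar = (θbar - θstar) - (θbar - θbar') := by
      ext j; simp only [Pi.sub_apply]; ring
    calc euclNorm (θbar' - θstar) = euclNorm ((θbar - θstar) - (θbar - θbar')) := by rw [h]
    _ ≤ R0 + E := enorm_sub_le' _ _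
  have hWsum : euclNorm (∑ i, w i) ≤ L * (A + B2 + N * E) := by
    calc euclNorm (∑ i, w i) ≤ ∑ i, euclNorm (w i) := enorm_sum_le' w
    _ ≤ ∑ i, L * (a i + b i + E) := Finset.sum_le_sum fun i _ => hw i
    _ = L * (A + B2 + N * E) := by
        rw [← Finset.mul_sum, hAdef, hB2def]
        congr 1
        rw [Finset.sum_add_distrib, Finset.sum_add_distrib, Finset.sum_const,
          Finset.card_univ, Fintype.card_fin, nsmul_eq_mul]
  have hmain : edot (θbar' - θstar) (∑ i, w i) ≤ (R0 + E) * (L * (A + B2 + N * E)) := by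
    calc edot (θbar' - θstar) (∑ i, w i)
        ≤ euclNorm (θbar' - θstar) * euclNorm (∑ i, w i) := edot_le' _ _
    _ ≤ (R0 + E) * (L * (A + B2 + N * E)) :=
        mul_le_mul htri hWsum (enorm_nonneg' _) (by positivity)
  set c3 : ℝ := 3 * ε * B * τ with hc3def
  set c : ℝ := ε * τ * N * B * L with hcdef
  set D : ℝ := (N:ℝ) * L ^ 2 / α with hDdef
  have hc30 : 0 ≤ c3 := by rw [hc3def]; positivity
  have hc0 : 0 ≤ c := by rw [hcdef]; positivity
  have hD0 : 0 ≤ D := by rw [hDdef]; positivity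
  have hE : E ≤ c3 * (T + Q + 1) := hdrift
  have hc3N : c3 * N ≤ 1 / 2 := by rw [hc3def]; linarith only [hstep]
  have hLc3 : L * c3 ≤ 3 * c := by
    rw [hc3def, hcdef]
    have h1 : (0:ℝ) ≤ ε * B * τ * L := by positivity
    linarith only [mul_le_mul_of_nonneg_left hN0 h1]
  have hcL : c ≤ L / 6 := by
    rw [hcdef]
    linarith only [mul_le_mul_of_nonneg_right hstep hL.le]
  have hαD : α * D = N * L ^ 2 := by rw [hDdef]; field_simp
  have P1 : L * R0 * A ≤ α / 4 * R0 ^ 2 + D * S := auxP1 L R0 A N S α D hα hαD hA2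
  have P2 : L * R0 * B2 ≤ α / 4 * R0 ^ 2 + D * S' := auxP1 L R0 B2 N S' α D hα hαD hB22
  have P3 : N * L * R0 * E ≤ 3 * c * (5/2 * R0 ^ 2 + P ^ 2 / 2 + S' / 2 + 1 / 2) := by
    refine auxP3 N L R0 E c3 T Q P S' c hR00 hc30 (by positivity) hE hT hQ2 ?_
    rw [hc3def, hcdef]; ring
  have P4 : L * E * A ≤ L / 2 * (N * E ^ 2 + S) := by
    have key := auxAM E A N S hE0 hA0 hS0 (by positivity) hA2
    have h2 := mul_le_mul_of_nonneg_left key (by positivity : (0:ℝ) ≤ L / 2)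
    linarith only [h2]
  have P5 : L * E * B2 ≤ L / 2 * (N * E ^ 2 + S') := by
    have key := auxAM E B2 N S' hE0 hB20 hS'0 (by positivity) hB22
    have h2 := mul_le_mul_of_nonneg_left key (by positivity : (0:ℝ) ≤ L / 2)
    linarith only [h2]
  have P6 : 2 * N * L * E ^ 2 ≤ 3 * (L * c3) * (2 * R0 ^ 2 + 2 * P ^ 2 + S' + 1) :=
    auxP6 N L E c3 T Q S' R0 P hE0 hc30 hT0 hQ0 hL.le (by positivity) hR00 hP0 hS'0
      hE hQ2 hT hc3N
  have hexp : edot (θbar' - θstar) (∑ i, w i) ≤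
      L * R0 * A + L * R0 * B2 + N * L * R0 * E + L * E * A + L * E * B2
        + N * L * E ^ 2 := by
    calc edot (θbar' - θstar) (∑ i, w i) ≤ (R0 + E) * (L * (A + B2 + N * E)) := hmain
    _ = L * R0 * A + L * R0 * B2 + N * L * R0 * E + L * E * A + L * E * B2
        + N * L * E ^ 2 := by ring
  rw [show (48 : ℝ) * ε * τ * N * B * L = 48 * c from by rw [hcdef]; ring,
      show (45 : ℝ) * ε * τ * N * B * L / 2 = 45 * c / 2 from by rw [hcdef]; ring,
      show (4:ℝ) * N * L ^ 2 / α + 5 * L = 4 * D + 5 * L from by rw [hDdef]; ring]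
  exact auxCombine _ R0 E A B2 S S' P c c3 D L α N hL hα hc0 hD0 hLc3 hcL hS'0
    hexp P1 P2 P3 P4 P5 P6
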